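/- Let n = 2m + r with m ≥ 1, τ ∈ {1,−1}, let J_c be the complex-type Jordan block of size 2m associated with a pair a ± bi with b ≠ 0, let A', D' be r×r real symmetric matrices, and set A = blockDiag(τE_{2m}, A') and D = blockDiag(τE_{2m}J_c, D'). Let b, e ∈ ℝⁿ and c ∈ ℝ, and suppose the Slater condition holds. Then problem (P) is unbounded from below. -/

import Mathlib

open Matrix

noncomputable def Emat (m : ℕ) : Matrix (Fin m) (Fin m) ℝ :=
  fun i j => if (i : ℕ) + (j : ℕ) + 1 = m then 1 else 0

noncomputable def complexJordanBlock (d : ℕ) (a b : ℝ) : Matrix (Fin d) (Fin d) ℝ :=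
  fun i j =>
    if (i : ℕ) / 2 = (j : ℕ) / 2 then
      (if (i : ℕ) % 2 = (j : ℕ) % 2 then a else if (i : ℕ) % 2 = 0 then -b else b)
    else if (i : ℕ) / 2 + 1 = (j : ℕ) / 2 then
      (if (i : ℕ) % 2 = (j : ℕ) % 2 then 1 else 0)
    else 0

lemma quad_expand {n : ℕ} (A : Matrix (Fin n) (Fin n) ℝ) (x d : Fin n → ℝ) (t : ℝ) :
    (x + t • d) ⬝ᵥ A *ᵥ (x + t • d)
      = x ⬝ᵥ A *ᵥ x + t * (x ⬝ᵥ A *ᵥ d + d ⬝ᵥ A *ᵥ x) + t ^ 2 * (d ⬝ᵥ A *ᵥ d) := by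
  simp only [mulVec_add, mulVec_smul, dotProduct_add, add_dotProduct, dotProduct_smul,
    smul_dotProduct, smul_eq_mul]
  ring

lemma unbounded_aux {n : ℕ} (A D : Matrix (Fin n) (Fin n) ℝ) (b e : Fin n → ℝ) (c : ℝ)
    (x0 d : Fin n → ℝ)
    (hx0 : (1/2) * (x0 ⬝ᵥ A *ᵥ x0) + b ⬝ᵥ x0 + c ≤ 0)
    (hdA : d ⬝ᵥ A *ᵥ d = 0) (hdD : d ⬝ᵥ D *ᵥ d < 0) (M : ℝ) :
    ∃ x : Fin n → ℝ, (1/2) * (x ⬝ᵥ A *ᵥ x) + b ⬝ᵥ x + c ≤ 0 ∧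
      (1/2) * (x ⬝ᵥ D *ᵥ x) + e ⬝ᵥ x < M := by
  set q := d ⬝ᵥ D *ᵥ d with hq
  set L : ℝ := (1/2) * (x0 ⬝ᵥ A *ᵥ d + d ⬝ᵥ A *ᵥ x0) + b ⬝ᵥ d with hL
  set L' : ℝ := (1/2) * (x0 ⬝ᵥ D *ᵥ d + d ⬝ᵥ D *ᵥ x0) + e ⬝ᵥ d with hL'
  set F : ℝ := (1/2) * (x0 ⬝ᵥ D *ᵥ x0) + e ⬝ᵥ x0 with hF
  set C : ℝ := |F| + |L'| + |M| + 1 with hC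
  set T : ℝ := max 1 (2 * C / (-q)) with hT
  have hT1 : 1 ≤ T := le_max_left _ _
  have hT0 : (0:ℝ) < T := lt_of_lt_of_le one_pos hT1
  have hqneg : (0:ℝ) < -q := by linarith
  have hTq : T * q / 2 ≤ -C := by
    have h2 : 2 * C / (-q) ≤ T := le_max_right _ _
    have h3 : 2 * C ≤ T * (-q) := (div_le_iff₀ hqneg).mp h2
    linarith
  set s : ℝ := if 0 ≤ L then -1 else 1 with hs
  have hsL : s * L ≤ 0 := by
    by_cases h : 0 ≤ L
    · simp only [hs, if_pos h]; linarith
    · simp only [hs, if_neg h]; push_neg at h; linarith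
  have hs1 : s = 1 ∨ s = -1 := by
    by_cases h : 0 ≤ L
    · right; simp [hs, h]
    · left; simp [hs, h]
  clear_value q L L' F C T s
  refine ⟨x0 + (s * T) • d, ?_, ?_⟩
  · have key : (1/2) * ((x0 + (s*T) • d) ⬝ᵥ A *ᵥ (x0 + (s*T) • d)) + b ⬝ᵥ (x0 + (s*T) • d) + c
        = ((1/2) * (x0 ⬝ᵥ A *ᵥ x0) + b ⬝ᵥ x0 + c) + T * (s * L)
          + (s*T)^2 / 2 * (d ⬝ᵥ A *ᵥ d) := by
      rw [quad_expand]
      simp only [dotProduct_add, dotProduct_smul, smul_eq_mul, hL]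
      ring
    rw [key, hdA]
    have h4 : T * (s * L) ≤ 0 := mul_nonpos_of_nonneg_of_nonpos hT0.le hsL
    simp only [mul_zero, add_zero]
    linarith
  · have key : (1/2) * ((x0 + (s*T) • d) ⬝ᵥ D *ᵥ (x0 + (s*T) • d)) + e ⬝ᵥ (x0 + (s*T) • d)
        = F + T * (s * L') + (s*T)^2 / 2 * q := by
      rw [quad_expand]
      simp only [dotProduct_add, dotProduct_smul, smul_eq_mul, hL', hF, hq]
      ring
    rw [key]
    have hsq : s^2 = 1 := by rcases hs1 with h | h <;> rw [h] <;> ring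
    have h5 : (s*T)^2 / 2 * q = T * (T * q / 2) := by
      have : (s*T)^2 = s^2 * T^2 := by ring
      rw [this, hsq]; ring
    rw [h5]
    have h6 : T * (T * q / 2) ≤ T * (-C) := mul_le_mul_of_nonneg_left hTq hT0.le
    have h7 : s * L' ≤ |L'| := by
      rcases hs1 with h | h <;> rw [h]
      · simpa using le_abs_self L'
      · simpa using neg_le_abs L'
    have h8 : T * (s * L') ≤ T * |L'| := mul_le_mul_of_nonneg_left h7 hT0.le
    have h9 : F ≤ |F| := le_abs_self F
    have h10 : -|M| ≤ M := neg_abs_le M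
    rw [mul_neg] at h6
    have h11 : T * C = T * |F| + T * |L'| + T * |M| + T := by rw [hC]; ring
    have h12 : |F| ≤ T * |F| := le_mul_of_one_le_left (abs_nonneg F) hT1
    have h13 : |M| ≤ T * |M| := le_mul_of_one_le_left (abs_nonneg M) hT1
    linarith

lemma reindex_quad {p q : ℕ} (M : Matrix (Fin p ⊕ Fin q) (Fin p ⊕ Fin q) ℝ)
    (v : Fin p ⊕ Fin q → ℝ) :
    (v ∘ finSumFinEquiv.symm) ⬝ᵥ
      (Matrix.reindex finSumFinEquiv finSumFinEquiv M) *ᵥ (v ∘ finSumFinEquiv.symm)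
      = v ⬝ᵥ M *ᵥ v := by
  rw [reindex_apply, submatrix_mulVec_equiv]
  have h1 : (v ∘ finSumFinEquiv.symm) ∘ (finSumFinEquiv (m := p) (n := q)).symm.symm = v := by
    ext x; simp
  rw [h1]
  exact comp_equiv_dotProduct_comp_equiv _ _ _

lemma block_quad {p q : ℕ} (B : Matrix (Fin p) (Fin p) ℝ) (B' : Matrix (Fin q) (Fin q) ℝ)
    (w : Fin p → ℝ) :
    (Sum.elim w (0 : Fin q → ℝ)) ⬝ᵥ (Matrix.fromBlocks B 0 0 B') *ᵥ (Sum.elim w 0)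
      = w ⬝ᵥ B *ᵥ w := by
  have h1 : (Sum.elim w (0 : Fin q → ℝ)) ∘ Sum.inl = w := rfl
  have h2 : (Sum.elim w (0 : Fin q → ℝ)) ∘ Sum.inr = 0 := rfl
  rw [fromBlocks_mulVec, h1, h2]
  simp [sumElim_dotProduct_sumElim]

lemma EJ_apply {N : ℕ} (a β : ℝ) (i j k : Fin N) (hk : (i : ℕ) + (k : ℕ) + 1 = N) :
    (Emat N * complexJordanBlock N a β) i j = complexJordanBlock N a β k j := by
  rw [mul_apply, Finset.sum_eq_single k]
  · simp [Emat, hk]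
  · intro x _ hxk
    have hx : ¬((i : ℕ) + (x : ℕ) + 1 = N) := fun h => hxk (Fin.ext (by omega))
    simp [Emat, hx]
  · intro h; exact absurd (Finset.mem_univ k) h

lemma pair_quad {N : ℕ} (M : Matrix (Fin N) (Fin N) ℝ) (i j : Fin N) (α γ : ℝ) :
    (Pi.single i α + Pi.single j γ) ⬝ᵥ M *ᵥ (Pi.single i α + Pi.single j γ)
      = α ^ 2 * M i i + α * γ * M i j + α * γ * M j i + γ ^ 2 * M j j := by
  simp only [mulVec_add, mulVec_single, dotProduct_add, add_dotProduct, single_dotProduct,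
    Pi.add_apply, Pi.smul_apply, col_apply, op_smul_eq_mul]
  ring

lemma single_quad {N : ℕ} (M : Matrix (Fin N) (Fin N) ℝ) (i : Fin N) (α : ℝ) :
    (Pi.single i α) ⬝ᵥ M *ᵥ (Pi.single i α) = α ^ 2 * M i i := by
  simp only [mulVec_single, single_dotProduct, Pi.smul_apply, col_apply, op_smul_eq_mul]
  ring

lemma exists_w (m : ℕ) (hm : 1 ≤ m) (τ a β : ℝ) (hβ : β ≠ 0) (hτ : τ = 1 ∨ τ = -1) :
    ∃ w : Fin (2 * m) → ℝ, w ⬝ᵥ (Emat (2 * m)) *ᵥ w = 0 ∧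
      τ * (w ⬝ᵥ (Emat (2 * m) * complexJordanBlock (2 * m) a β) *ᵥ w) < 0 := by
  have hβ2 : 0 < β ^ 2 := by positivity
  have hτ2 : τ ^ 2 = 1 := by rcases hτ with h | h <;> rw [h] <;> norm_num
  rcases eq_or_lt_of_le hm with h1 | h2
  · -- m = 1
    subst h1
    have hτβ : τ * β ≠ 0 := by
      rcases hτ with h | h <;> rw [h] <;> simpa using hβ
    rcases lt_or_gt_of_ne hτβ with hneg | hpos
    · -- τβ < 0 : use e₀, value τ * β
      refine ⟨Pi.single ⟨0, by omega⟩ 1, ?_, ?_⟩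
      · rw [single_quad]
        have : Emat (2 * 1) ⟨0, by omega⟩ ⟨0, by omega⟩ = 0 := by
          simp [Emat]
        rw [this]; ring
      · rw [single_quad, EJ_apply a β _ _ ⟨1, by omega⟩ (by simp)]
        have : complexJordanBlock (2 * 1) a β ⟨1, by omega⟩ ⟨0, by omega⟩ = β := by
          simp [complexJordanBlock]
        rw [this]; nlinarith
    · -- τβ > 0 : use e₁, value -τ * β
      refine ⟨Pi.single ⟨1, by omega⟩ 1, ?_, ?_⟩
      · rw [single_quad]
        have : Emat (2 * 1) ⟨1, by omega⟩ ⟨1, by omega⟩ = 0 := by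
          simp [Emat]
        rw [this]; ring
      · rw [single_quad, EJ_apply a β _ _ ⟨0, by omega⟩ (by simp)]
        have : complexJordanBlock (2 * 1) a β ⟨0, by omega⟩ ⟨1, by omega⟩ = -β := by
          simp [complexJordanBlock]
        rw [this]; nlinarith
  · -- 2 ≤ m
    have hm2 : 2 ≤ m := h2
    refine ⟨Pi.single (⟨0, by omega⟩ : Fin (2 * m)) 1
      + Pi.single (⟨2 * m - 2, by omega⟩ : Fin (2 * m)) (-(τ * β)), ?_, ?_⟩
    · rw [pair_quad]
      have e00 : Emat (2 * m) ⟨0, by omega⟩ ⟨0, by omega⟩ = 0 := by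
        simp only [Emat, Fin.val_mk]
        split_ifs <;> first | rfl | (exfalso; first | omega | tauto)
      have e01 : Emat (2 * m) ⟨0, by omega⟩ ⟨2 * m - 2, by omega⟩ = 0 := by
        simp only [Emat, Fin.val_mk]
        split_ifs <;> first | rfl | (exfalso; first | omega | tauto)
      have e10 : Emat (2 * m) ⟨2 * m - 2, by omega⟩ ⟨0, by omega⟩ = 0 := by
        simp only [Emat, Fin.val_mk]
        split_ifs <;> first | rfl | (exfalso; first | omega | tauto)
      have e11 : Emat (2 * m) ⟨2 * m - 2, by omega⟩ ⟨2 * m - 2, by omega⟩ = 0 := by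
        simp only [Emat, Fin.val_mk]
        split_ifs <;> first | rfl | (exfalso; first | omega | tauto)
      rw [e00, e01, e10, e11]; ring
    · rw [pair_quad]
      have p00 : (Emat (2 * m) * complexJordanBlock (2 * m) a β) ⟨0, by omega⟩ ⟨0, by omega⟩ = 0 := by
        rw [EJ_apply a β _ _ ⟨2 * m - 1, by omega⟩ (by simp; omega)]
        simp only [complexJordanBlock, Fin.val_mk]
        split_ifs <;> first | rfl | (exfalso; first | omega | tauto)
      have p01 : (Emat (2 * m) * complexJordanBlock (2 * m) a β) ⟨0, by omega⟩ ⟨2 * m - 2, by omega⟩ = β := by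
        rw [EJ_apply a β _ _ ⟨2 * m - 1, by omega⟩ (by simp; omega)]
        simp only [complexJordanBlock, Fin.val_mk]
        split_ifs <;> first | rfl | (exfalso; first | omega | tauto)
      have p10 : (Emat (2 * m) * complexJordanBlock (2 * m) a β) ⟨2 * m - 2, by omega⟩ ⟨0, by omega⟩ = β := by
        rw [EJ_apply a β _ _ ⟨1, by omega⟩ (by simp; omega)]
        simp only [complexJordanBlock, Fin.val_mk]
        split_ifs <;> first | rfl | (exfalso; first | omega | tauto)
      have p11 : (Emat (2 * m) * complexJordanBlock (2 * m) a β) ⟨2 * m - 2, by omega⟩ ⟨2 * m - 2, by omega⟩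
          = 0 := by
        rw [EJ_apply a β _ _ ⟨1, by omega⟩ (by simp; omega)]
        simp only [complexJordanBlock]
        split_ifs <;> first | rfl | (exfalso; first | omega | tauto)
      rw [p00, p01, p10, p11]
      have : τ * (1 ^ 2 * 0 + 1 * -(τ * β) * β + 1 * -(τ * β) * β + (-(τ * β)) ^ 2 * 0)
          = -2 * (τ ^ 2) * β ^ 2 := by ring
      rw [this, hτ2]; nlinarith

/-- Theorem 2.3 of Jiang–Li–Wu: if a type A block pair `(τ E_{2m}, τ E_{2m} J_c)` with a
complex-type Jordan block `J_c` (associated with `a ± b i`, `b ≠ 0`) occurs in the canonical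
form, then the GTRS `(P)` is unbounded from below (assuming the Slater condition). -/
theorem stmt_4 (m r : ℕ) (hm : 1 ≤ m) (τ a β : ℝ) (hβ : β ≠ 0) (hτ : τ = 1 ∨ τ = -1)
    (A' D' : Matrix (Fin r) (Fin r) ℝ) (hA' : A'.IsSymm) (hD' : D'.IsSymm)
    (A D : Matrix (Fin (2 * m + r)) (Fin (2 * m + r)) ℝ)
    (hA : A = Matrix.reindex finSumFinEquiv finSumFinEquiv
      (Matrix.fromBlocks (τ • Emat (2 * m)) 0 0 A'))
    (hD : D = Matrix.reindex finSumFinEquiv finSumFinEquiv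
      (Matrix.fromBlocks (τ • (Emat (2 * m) * complexJordanBlock (2 * m) a β)) 0 0 D'))
    (b e : Fin (2 * m + r) → ℝ) (c : ℝ)
    (hslater : ∃ x : Fin (2 * m + r) → ℝ, (1/2) * (x ⬝ᵥ A.mulVec x) + b ⬝ᵥ x + c < 0) :
    ∀ M : ℝ, ∃ x : Fin (2 * m + r) → ℝ,
      (1/2) * (x ⬝ᵥ A.mulVec x) + b ⬝ᵥ x + c ≤ 0 ∧
      (1/2) * (x ⬝ᵥ D.mulVec x) + e ⬝ᵥ x < M := by
  intro M
  obtain ⟨x0, hx0⟩ := hslater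
  obtain ⟨w, hwE, hwP⟩ := exists_w m hm τ a β hβ hτ
  have hdA : ((Sum.elim w (0 : Fin r → ℝ)) ∘ finSumFinEquiv.symm) ⬝ᵥ
      A *ᵥ ((Sum.elim w (0 : Fin r → ℝ)) ∘ finSumFinEquiv.symm) = 0 := by
    rw [hA, reindex_quad, block_quad, smul_mulVec, dotProduct_smul, smul_eq_mul, hwE,
      mul_zero]
  have hdD : ((Sum.elim w (0 : Fin r → ℝ)) ∘ finSumFinEquiv.symm) ⬝ᵥ
      D *ᵥ ((Sum.elim w (0 : Fin r → ℝ)) ∘ finSumFinEquiv.symm) < 0 := by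
    rw [hD, reindex_quad, block_quad, smul_mulVec, dotProduct_smul, smul_eq_mul]
    exact hwP
  exact unbounded_aux A D b e c x0 _ hx0.le hdA hdD M
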